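/- In the group algebra kQ_{4t} over a field of characteristic 2 with t ≥ 4 a power of 2, the element u = c a^{2t-2} + b a^{2t-3} satisfies au = a^{2t-2}b + a^{2t-1}, cu = a^{2t-2}b + a^{2t-1}, ua = a^{2t-2}b + N, and ub = a^{2t-2}b, where a = g+1, b = h+1, c = hg+1 and N is the norm element. -/

import Mathlib

open MonoidAlgebra QuaternionGroup

private lemma geom_char2 {R : Type*} [Ring R] [CharP R 2] (x : R) (m : ℕ) :
    (x + 1) ^ (2 ^ m - 1) = ∑ i ∈ Finset.range (2 ^ m), x ^ i := by
  haveI : Fact (Nat.Prime 2) := ⟨Nat.prime_two⟩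
  induction m with
  | zero => simp
  | succ m ih =>
    have h0 : (1:ℕ) ≤ 2 ^ m := Nat.one_le_two_pow
    have h1 : (2:ℕ) ^ (m+1) - 1 = 2 ^ m + (2 ^ m - 1) := by rw [pow_succ]; omega
    have h2 : (2:ℕ) ^ (m+1) = 2 ^ m + 2 ^ m := by rw [pow_succ]; omega
    rw [h1, pow_add, ih, add_pow_char_pow_of_commute 2 m (Commute.one_right x), one_pow,
      h2, Finset.sum_range_add, add_mul, one_mul, Finset.mul_sum]
    simp_rw [← pow_add]
    rw [add_comm]

private lemma zmod_sum {M : Type*} [AddCommMonoid M] (n : ℕ) [NeZero n] (F : ZMod n → M) :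
    ∑ i : ZMod n, F i = ∑ i ∈ Finset.range n, F (i : ZMod n) := by
  rw [← Fin.sum_univ_eq_sum_range (fun i => F (i : ZMod n)) n]
  refine (Fintype.sum_bijective (fun i : Fin n => ((i : ℕ) : ZMod n)) ?_ _ _ (fun x => rfl)).symm
  rw [Fintype.bijective_iff_injective_and_card]
  constructor
  · intro i j hij
    simp only at hij
    exact Fin.ext (by rw [← ZMod.val_cast_of_lt i.2, ← ZMod.val_cast_of_lt j.2, hij])
  · simp [ZMod.card]

set_option maxHeartbeats 1000000 in
/-- for `t ≥ 4`, `u = c a^{2t-2} + b a^{2t-3}` satisfies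
`au = a^{2t-2}b + a^{2t-1}`, `cu = a^{2t-2}b + a^{2t-1}`, `ua = a^{2t-2}b + N`,
`ub = a^{2t-2}b`. -/
theorem stmt_8 (k : Type*) [Field k] [CharP k 2] (t : ℕ) (ht : 4 ≤ t)
    (hpow : ∃ m : ℕ, t = 2 ^ m) [NeZero t]
    (g h : MonoidAlgebra k (QuaternionGroup t))
    (hg : g = of k (QuaternionGroup t) (QuaternionGroup.a 1))
    (hh : h = of k (QuaternionGroup t) (QuaternionGroup.xa 0))
    (a b c N u : MonoidAlgebra k (QuaternionGroup t))
    (ha : a = g + 1) (hb : b = h + 1) (hc : c = h * g + 1)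
    (hN : N = ∑ j : QuaternionGroup t, of k (QuaternionGroup t) j)
    (hu : u = c * a ^ (2 * t - 2) + b * a ^ (2 * t - 3)) :
    a * u = a ^ (2 * t - 2) * b + a ^ (2 * t - 1) ∧
    c * u = a ^ (2 * t - 2) * b + a ^ (2 * t - 1) ∧
    u * a = a ^ (2 * t - 2) * b + N ∧
    u * b = a ^ (2 * t - 2) * b := by
  haveI : Fact (Nat.Prime 2) := ⟨Nat.prime_two⟩
  haveI hchar : CharP (MonoidAlgebra k (QuaternionGroup t)) 2 :=
    charP_of_injective_algebraMap' k (A := MonoidAlgebra k (QuaternionGroup t)) 2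
  obtain ⟨m, hm⟩ := hpow
  have h2t : 2 * t = 2 ^ (m + 1) := by rw [hm, pow_succ]; ring
  -- group facts
  have hG1 : g ^ (2*t) = 1 := by
    rw [hg, ← map_pow, a_one_pow,
      show (((2*t : ℕ)) : ZMod (2*t)) = 0 from ZMod.natCast_self _,
      ← QuaternionGroup.one_def, map_one]
  have hGH : g * h = h * g ^ (2*t-1) := by
    rw [hg, hh, ← map_pow, a_one_pow, ← map_mul, ← map_mul]
    congr 1
    rw [a_mul_xa, xa_mul_a, zero_sub, zero_add]
    congr 1
    have : ((2*t-1 : ℕ) : ZMod (2*t)) = ((2*t : ℕ) : ZMod (2*t)) - 1 := by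
      push_cast [Nat.cast_sub (by omega : 1 ≤ 2*t)]
      ring
    rw [this, ZMod.natCast_self, zero_sub]
  have hHH : h * h = g ^ t := by
    rw [hh, hg, ← map_pow, a_one_pow, ← map_mul]
    congr 1
    rw [xa_mul_xa]
    congr 1
    simp
  -- characteristic two facts
  have hzz : ∀ z : MonoidAlgebra k (QuaternionGroup t), z + z = 0 :=
    fun z => CharTwo.add_self_eq_zero z
  have hcomm : Commute g a := ha ▸ (Commute.refl g).add_right (Commute.one_right g)
  have hF : a ^ (2*t) = 0 := by
    have h1 : (g + 1) ^ (2^(m+1)) = g ^ (2^(m+1)) + 1 := by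
      rw [add_pow_char_pow_of_commute 2 (m+1) (Commute.one_right g), one_pow]
    rw [← h2t] at h1
    rw [ha, h1, hG1, hzz]
  have hga : g = a + 1 := by rw [ha, add_assoc, hzz, add_zero]
  have hgt : g ^ t = a ^ t + 1 := by
    have h1 : (g + 1) ^ (2^m) = g ^ (2^m) + 1 := by
      rw [add_pow_char_pow_of_commute 2 m (Commute.one_right g), one_pow]
    rw [← hm] at h1
    rw [ha, h1, add_assoc, hzz, add_zero]
  have e1 : (2*t - 1) + 1 = 2*t := by omega
  have e2 : (2*t - 2) + 1 = 2*t - 1 := by omega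
  have e3 : (2*t - 3) + 1 = 2*t - 2 := by omega
  have M1 : a * a ^ (2*t-2) = a ^ (2*t-1) := by rw [← pow_succ', e2]
  have M2 : a * a ^ (2*t-3) = a ^ (2*t-2) := by rw [← pow_succ', e3]
  have M3 : a * a ^ (2*t-1) = 0 := by rw [← pow_succ', e1, hF]
  have M1' : a ^ (2*t-2) * a = a ^ (2*t-1) := by rw [← pow_succ, e2]
  have M2' : a ^ (2*t-3) * a = a ^ (2*t-2) := by rw [← pow_succ, e3]
  have M3' : a ^ (2*t-1) * a = 0 := by rw [← pow_succ, e1, hF]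
  have hbig : ∀ d : ℕ, 2*t ≤ d → a ^ d = 0 := fun d hd => by
    rw [show d = 2*t + (d - 2*t) by omega, pow_add, hF, zero_mul]
  have hgs : g * a ^ (2*t-1) = a ^ (2*t-1) := by
    rw [hga, add_mul, one_mul, M3, zero_add]
  have hgA2 : g * a ^ (2*t-2) = a ^ (2*t-1) + a ^ (2*t-2) := by
    rw [hga, add_mul, one_mul, M1]
  have hgA3 : g * a ^ (2*t-3) = a ^ (2*t-2) + a ^ (2*t-3) := by
    rw [hga, add_mul, one_mul, M2]
  have hgjs : ∀ j : ℕ, g ^ j * a ^ (2*t-1) = a ^ (2*t-1) := by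
    intro j
    induction j with
    | zero => rw [pow_zero, one_mul]
    | succ i ih => rw [pow_succ', mul_assoc, ih, hgs]
  have hSs : g ^ (2*t-1) * a ^ (2*t-1) = a ^ (2*t-1) := hgjs _
  have hSa : g ^ (2*t-1) * a = 1 + g ^ (2*t-1) := by
    rw [ha, mul_add, mul_one, ← pow_succ, e1, hG1]
  have hSA2 : g ^ (2*t-1) * a ^ (2*t-2) = a ^ (2*t-1) + a ^ (2*t-2) := by
    have h1 : g ^ (2*t-1) * (a * a ^ (2*t-2)) = a ^ (2*t-1) := by rw [M1, hSs]
    rw [← mul_assoc, hSa, add_mul, one_mul] at h1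
    have h2 := congrArg (fun z => a ^ (2*t-2) + z) h1
    rw [← add_assoc, hzz, zero_add] at h2
    exact h2.trans (add_comm _ _)
  have hSA3 : g ^ (2*t-1) * a ^ (2*t-3) = a ^ (2*t-3) + (a ^ (2*t-1) + a ^ (2*t-2)) := by
    have h1 : g ^ (2*t-1) * (a * a ^ (2*t-3)) = a ^ (2*t-1) + a ^ (2*t-2) := by rw [M2, hSA2]
    rw [← mul_assoc, hSa, add_mul, one_mul] at h1
    have h2 := congrArg (fun z => a ^ (2*t-3) + z) h1
    rw [← add_assoc, hzz, zero_add] at h2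
    exact h2
  -- the commutation rule  a^j h = h g^(2t-j) a^j
  have hAH : a * h = h * (g ^ (2*t-1) * a) := by
    rw [hSa, ha, add_mul, one_mul, hGH, mul_add, mul_one, add_comm]
  have hswap : ∀ (p i q : ℕ), g ^ p * a ^ i * (g ^ q * a) = g ^ (p+q) * a ^ (i+1) := by
    intro p i q
    simp only [pow_add, pow_succ, mul_assoc]
    rw [← mul_assoc (a ^ i), (hcomm.pow_pow q i).symm.eq, mul_assoc]
  have hE : ∀ j, j ≤ 2*t → a ^ j * h = h * (g ^ (2*t - j) * a ^ j) := by
    intro j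
    induction j with
    | zero => intro _; simp [hG1]
    | succ i ih =>
      intro hij
      have hi : i ≤ 2*t := by omega
      have harith : (2*t - i) + (2*t - 1) = 2*t + (2*t - (i+1)) := by omega
      calc a ^ (i+1) * h = a ^ i * (a * h) := by rw [pow_succ, mul_assoc]
        _ = (a ^ i * h) * (g ^ (2*t-1) * a) := by rw [hAH, mul_assoc]
        _ = h * (g ^ (2*t-i) * a ^ i * (g ^ (2*t-1) * a)) := by
              rw [ih hi, mul_assoc, mul_assoc]
        _ = h * (g ^ ((2*t-i) + (2*t-1)) * a ^ (i+1)) := by rw [hswap]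
        _ = h * (g ^ (2*t - (i+1)) * a ^ (i+1)) := by rw [harith, pow_add, hG1, one_mul]
  -- monomial commutation lemmas
  have hsh : a ^ (2*t-1) * h = h * a ^ (2*t-1) := by
    have h1 := hE (2*t-1) (by omega)
    rw [show 2*t - (2*t-1) = 1 by omega, pow_one, hgs] at h1
    exact h1
  have hg2A2 : g ^ 2 * a ^ (2*t-2) = a ^ (2*t-2) := by
    rw [pow_two, mul_assoc, hgA2, mul_add, hgs, hgA2, ← add_assoc, hzz, zero_add]
  have hA2h : a ^ (2*t-2) * h = h * a ^ (2*t-2) := by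
    have h1 := hE (2*t-2) (by omega)
    rw [show 2*t - (2*t-2) = 2 by omega, hg2A2] at h1
    exact h1
  have hg2A3 : g ^ 2 * a ^ (2*t-3) = a ^ (2*t-1) + a ^ (2*t-3) := by
    rw [pow_two, mul_assoc, hgA3, mul_add, hgA2, hgA3, add_assoc, ← add_assoc (a^(2*t-2)),
      hzz, zero_add]
  have hg3A3 : g ^ 3 * a ^ (2*t-3) = a ^ (2*t-1) + (a ^ (2*t-2) + a ^ (2*t-3)) := by
    rw [pow_succ', mul_assoc, hg2A3, mul_add, hgs, hgA3]
  have hA3h : a ^ (2*t-3) * h = h * (a ^ (2*t-1) + (a ^ (2*t-2) + a ^ (2*t-3))) := by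
    have h1 := hE (2*t-3) (by omega)
    rw [show 2*t - (2*t-3) = 3 by omega, hg3A3] at h1
    exact h1
  have haha2 : a * (h * a ^ (2*t-2)) = h * a ^ (2*t-1) := by
    rw [← mul_assoc, hAH, mul_assoc, mul_assoc, M1, hSs]
  have haha3 : a * (h * a ^ (2*t-3)) = h * (a ^ (2*t-1) + a ^ (2*t-2)) := by
    rw [← mul_assoc, hAH, mul_assoc, mul_assoc, M2, hSA2]
  have hahs : a * (h * a ^ (2*t-1)) = 0 := by
    rw [← mul_assoc, hAH, mul_assoc, mul_assoc, M3, mul_zero, mul_zero]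
  have hgha2 : g * (h * a ^ (2*t-2)) = h * (a ^ (2*t-1) + a ^ (2*t-2)) := by
    rw [← mul_assoc, hGH, mul_assoc, hSA2]
  have hgha3 : g * (h * a ^ (2*t-3)) = h * (a ^ (2*t-3) + (a ^ (2*t-1) + a ^ (2*t-2))) := by
    rw [← mul_assoc, hGH, mul_assoc, hSA3]
  have hghs : g * (h * a ^ (2*t-1)) = h * a ^ (2*t-1) := by
    rw [← mul_assoc, hGH, mul_assoc, hSs]
  have hta2 : a ^ t * a ^ (2*t-2) = 0 := by rw [← pow_add]; exact hbig _ (by omega)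
  have hta3 : a ^ t * a ^ (2*t-3) = 0 := by rw [← pow_add]; exact hbig _ (by omega)
  have hts : a ^ t * a ^ (2*t-1) = 0 := by rw [← pow_add]; exact hbig _ (by omega)
  have hhha2 : h * (h * a ^ (2*t-2)) = a ^ (2*t-2) := by
    rw [← mul_assoc, hHH, hgt, add_mul, one_mul, hta2, zero_add]
  have hhha3 : h * (h * a ^ (2*t-3)) = a ^ (2*t-3) := by
    rw [← mul_assoc, hHH, hgt, add_mul, one_mul, hta3, zero_add]
  have hhhs : h * (h * a ^ (2*t-1)) = a ^ (2*t-1) := by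
    rw [← mul_assoc, hHH, hgt, add_mul, one_mul, hts, zero_add]
  -- the norm element
  have hNval : N = a ^ (2*t-1) + h * a ^ (2*t-1) := by
    have hs_sum : a ^ (2*t-1) = ∑ i ∈ Finset.range (2*t), g ^ i := by
      have h1 := geom_char2 g (m+1)
      rw [← h2t] at h1
      rw [ha, h1]
    let e : ZMod (2*t) ⊕ ZMod (2*t) ≃ QuaternionGroup t :=
      { toFun := fun x => match x with
          | Sum.inl j => QuaternionGroup.a j
          | Sum.inr j => QuaternionGroup.xa j
        invFun := fun i => match i with
          | QuaternionGroup.a j => Sum.inl j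
          | QuaternionGroup.xa j => Sum.inr j
        left_inv := by rintro (x|x) <;> rfl
        right_inv := by rintro (x|x) <;> rfl }
    have h1 : N = (∑ i : ZMod (2*t), of k (QuaternionGroup t) (QuaternionGroup.a i))
        + ∑ i : ZMod (2*t), of k (QuaternionGroup t) (QuaternionGroup.xa i) := by
      rw [hN, ← Fintype.sum_equiv e (fun x => of k (QuaternionGroup t) (e x))
        (fun j => of k (QuaternionGroup t) j) (fun x => rfl), Fintype.sum_sum_type]
      rfl
    have h2 : (∑ i : ZMod (2*t), of k (QuaternionGroup t) (QuaternionGroup.a i))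
        = a ^ (2*t-1) := by
      rw [hs_sum, zmod_sum (2*t) (fun i => of k (QuaternionGroup t) (QuaternionGroup.a i))]
      refine Finset.sum_congr rfl fun i _ => ?_
      rw [hg, ← map_pow, a_one_pow]
    have h3 : (∑ i : ZMod (2*t), of k (QuaternionGroup t) (QuaternionGroup.xa i))
        = h * a ^ (2*t-1) := by
      rw [hs_sum, Finset.mul_sum,
        zmod_sum (2*t) (fun i => of k (QuaternionGroup t) (QuaternionGroup.xa i))]
      refine Finset.sum_congr rfl fun i _ => ?_
      rw [hg, hh, ← map_pow, a_one_pow, ← map_mul, xa_mul_a, zero_add]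
    rw [h1, h2, h3]
  -- finishing
  have hz2 : ∀ v : MonoidAlgebra k (QuaternionGroup t), (2:ℤ) • v = 0 := fun v => by
    rw [two_zsmul, CharTwo.add_self_eq_zero]
  have hz3 : (3 : MonoidAlgebra k (QuaternionGroup t)) = 1 := by
    rw [show (3: MonoidAlgebra k (QuaternionGroup t)) = 2+1 by norm_num,
      CharTwo.two_eq_zero, zero_add]
  refine ⟨?_, ?_, ?_, ?_⟩ <;>
  · simp only [hu, hb, hc, hNval, mul_add, add_mul, mul_one, one_mul, mul_assoc,
      M1, M2, M3, M1', M2', M3', hgs, hgA2, hgA3, hsh, hA2h, hA3h,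
      haha2, haha3, hahs, hgha2, hgha3, hghs, hhha2, hhha3, hhhs,
      mul_zero, zero_mul, add_zero, zero_add]
    try abel_nf
    try simp [hz2, hz3]
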